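/- Let ξ be a real number with 0 < ξ < 1/log 2, set κ := 1/ξ − log 2, a := log(e^{1/ξ} − 1), and k := min(κ, a). Then there exists a constant C > 0, depending only on ξ, such that for every integer r ≥ 2, ∑_{p=0}^{r−2} S_{p,r−1} + ∑_{p=r−1}^{∞} S_{p,p} ≤ C · r · e^{−k r}, where S_{p,n₀} := ∑_{n=n₀}^{∞} C(n, p) e^{−n/ξ} and C(n, p) is the binomial coefficient. -/
import Mathlib


/-- `S_{p,n₀} := ∑_{n=n₀}^∞ C(n,p) e^{-n/ξ}`. -/
noncomputable def Spn (ξ : ℝ) (p n₀ : ℕ) : ℝ :=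
  ∑' n : {n : ℕ // n₀ ≤ n}, (n.1.choose p : ℝ) * Real.exp (-(n.1 : ℝ) / ξ)

lemma choose_le_two_pow' (n p : ℕ) : n.choose p ≤ 2 ^ n := by
  rcases le_or_gt p n with h | h
  · calc n.choose p ≤ ∑ m ∈ Finset.range (n + 1), n.choose m :=
          Finset.single_le_sum (fun _ _ => Nat.zero_le _)
            (Finset.mem_range.mpr (Nat.lt_succ_of_le h))
    _ = 2 ^ n := Nat.sum_range_choose n
  · simp [Nat.choose_eq_zero_of_lt h]

/-- Shift equivalence `ℕ ≃ {n // n₀ ≤ n}`. -/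
def shiftEquiv' (n₀ : ℕ) : ℕ ≃ {n : ℕ // n₀ ≤ n} where
  toFun k := ⟨n₀ + k, Nat.le_add_right _ _⟩
  invFun n := n.1 - n₀
  left_inv k := by simp
  right_inv n := by ext; simpa using Nat.add_sub_cancel' n.2

lemma geom_subtype_summable {x : ℝ} (hx0 : 0 ≤ x) (hx1 : x < 1) (n₀ : ℕ) :
    Summable (fun n : {n : ℕ // n₀ ≤ n} => x ^ n.1) := by
  have hsum : Summable (fun k : ℕ => x ^ (n₀ + k)) := by
    simpa [pow_add] using (summable_geometric_of_lt_one hx0 hx1).mul_left (x ^ n₀)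
  exact ((shiftEquiv' n₀).summable_iff
    (f := fun n : {n : ℕ // n₀ ≤ n} => x ^ n.1)).mp hsum

lemma geom_subtype_tsum {x : ℝ} (hx0 : 0 ≤ x) (hx1 : x < 1) (n₀ : ℕ) :
    ∑' n : {n : ℕ // n₀ ≤ n}, x ^ n.1 = x ^ n₀ / (1 - x) := by
  rw [← (shiftEquiv' n₀).tsum_eq (fun n : {n : ℕ // n₀ ≤ n} => x ^ n.1)]
  have : ∀ k : ℕ, x ^ ((shiftEquiv' n₀) k).1 = x ^ n₀ * x ^ k := fun k => by
    simp [shiftEquiv', pow_add]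
  rw [tsum_congr this, tsum_mul_left, tsum_geometric_of_lt_one hx0 hx1, div_eq_mul_inv]

section Main

variable {ξ : ℝ}

lemma term_le (hξ0 : 0 < ξ) (p n : ℕ) :
    (n.choose p : ℝ) * Real.exp (-(n : ℝ) / ξ) ≤ (2 * Real.exp (-(1 / ξ))) ^ n := by
  have hexp : Real.exp (-(n : ℝ) / ξ) = Real.exp (-(1 / ξ)) ^ n := by
    rw [← Real.exp_nat_mul]
    ring_nf
  rw [hexp, mul_pow]
  apply mul_le_mul_of_nonneg_right _ (pow_nonneg (Real.exp_pos _).le n)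
  exact_mod_cast choose_le_two_pow' n p

lemma term_nonneg (p n : ℕ) : 0 ≤ (n.choose p : ℝ) * Real.exp (-(n : ℝ) / ξ) := by
  positivity

lemma Spn_summable (hξ0 : 0 < ξ) (hx1 : 2 * Real.exp (-(1 / ξ)) < 1) (p n₀ : ℕ) :
    Summable (fun n : {n : ℕ // n₀ ≤ n} =>
      (n.1.choose p : ℝ) * Real.exp (-(n.1 : ℝ) / ξ)) :=
  Summable.of_nonneg_of_le (fun n => term_nonneg p n.1) (fun n => term_le hξ0 p n.1)
    (geom_subtype_summable (by positivity) hx1 n₀)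

lemma Spn_le (hξ0 : 0 < ξ) (hx1 : 2 * Real.exp (-(1 / ξ)) < 1) (p n₀ : ℕ) :
    Spn ξ p n₀ ≤ (2 * Real.exp (-(1 / ξ))) ^ n₀ / (1 - 2 * Real.exp (-(1 / ξ))) := by
  have hx0 : (0:ℝ) ≤ 2 * Real.exp (-(1 / ξ)) := by positivity
  rw [← geom_subtype_tsum hx0 hx1 n₀]
  exact Summable.tsum_le_tsum (fun n => term_le hξ0 p n.1) (Spn_summable hξ0 hx1 p n₀)
    (geom_subtype_summable hx0 hx1 n₀)

lemma Spn_nonneg (p n₀ : ℕ) : 0 ≤ Spn ξ p n₀ :=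
  tsum_nonneg fun n => term_nonneg p n.1

end Main

/-- For `0 < ξ < 1/log 2`, with `κ := 1/ξ - log 2`, `a := log(e^{1/ξ} - 1)`, and
`k := min(κ, a)`, there is a constant `C > 0` depending only on `ξ` such that for every
`r ≥ 2`, `∑_{p=0}^{r-2} S_{p,r-1} + ∑_{p=r-1}^∞ S_{p,p} ≤ C r e^{-k r}`. -/
theorem truncated_coupling_bound (ξ : ℝ) (hξ0 : 0 < ξ) (hξ : ξ < 1 / Real.log 2) :
    ∃ C : ℝ, 0 < C ∧ ∀ r : ℕ, 2 ≤ r →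
      (∑ p ∈ Finset.range (r - 1), Spn ξ p (r - 1)) +
          (∑' p : {p : ℕ // r - 1 ≤ p}, Spn ξ p.1 p.1) ≤
        C * r * Real.exp
          (-(min (1 / ξ - Real.log 2) (Real.log (Real.exp (1 / ξ) - 1))) * r) := by
  have hlog2 : (0:ℝ) < Real.log 2 := Real.log_pos (by norm_num)
  have hκ : Real.log 2 < 1 / ξ := by
    rw [lt_div_iff₀ hξ0]
    calc Real.log 2 * ξ = ξ * Real.log 2 := mul_comm _ _
    _ < (1 / Real.log 2) * Real.log 2 := by gcongr
    _ = 1 := by field_simp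
  set x : ℝ := 2 * Real.exp (-(1 / ξ)) with hxdef
  have hx0 : (0:ℝ) < x := by positivity
  have hxe : x = Real.exp (-(1 / ξ - Real.log 2)) := by
    have h2 : Real.exp (-(1 / ξ - Real.log 2)) = Real.exp (Real.log 2) * Real.exp (-(1 / ξ)) := by
      rw [← Real.exp_add]; congr 1; ring
    rw [h2, Real.exp_log (by norm_num : (0:ℝ) < 2), hxdef]
  have hx1 : x < 1 := by
    rw [hxe, Real.exp_lt_one_iff]
    linarith
  set κ : ℝ := 1 / ξ - Real.log 2 with hκdef
  set k : ℝ := min κ (Real.log (Real.exp (1 / ξ) - 1)) with hkdef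
  have hkκ : k ≤ κ := min_le_left _ _
  have hden : 0 < 1 - x := by linarith
  refine ⟨Real.exp κ * (1 / (1 - x) + 1 / (1 - x) ^ 2),
    mul_pos (Real.exp_pos _)
      (add_pos (div_pos one_pos hden) (div_pos one_pos (pow_pos hden 2))), fun r hr => ?_⟩
  have hr1 : 1 ≤ r := le_trans (by norm_num) hr
  have hcast : ((r - 1 : ℕ) : ℝ) = (r : ℝ) - 1 := by
    rw [Nat.cast_sub hr1]; norm_num
  -- bound the finite sum
  have h1 : (∑ p ∈ Finset.range (r - 1), Spn ξ p (r - 1)) ≤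
      ((r : ℝ) - 1) * (x ^ (r - 1) / (1 - x)) := by
    calc (∑ p ∈ Finset.range (r - 1), Spn ξ p (r - 1))
        ≤ ∑ p ∈ Finset.range (r - 1), x ^ (r - 1) / (1 - x) :=
          Finset.sum_le_sum fun p _ => Spn_le hξ0 hx1 p (r - 1)
      _ = ((r - 1 : ℕ) : ℝ) * (x ^ (r - 1) / (1 - x)) := by
          rw [Finset.sum_const, Finset.card_range, nsmul_eq_mul]
      _ = ((r : ℝ) - 1) * (x ^ (r - 1) / (1 - x)) := by rw [hcast]
  -- bound the tail tsum
  have hbsummable : Summable (fun p : {p : ℕ // r - 1 ≤ p} => x ^ p.1 / (1 - x)) :=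
    (geom_subtype_summable hx0.le hx1 (r - 1)).div_const _
  have h2 : (∑' p : {p : ℕ // r - 1 ≤ p}, Spn ξ p.1 p.1) ≤
      x ^ (r - 1) / (1 - x) ^ 2 := by
    have hle : ∀ p : {p : ℕ // r - 1 ≤ p}, Spn ξ p.1 p.1 ≤ x ^ p.1 / (1 - x) :=
      fun p => Spn_le hξ0 hx1 p.1 p.1
    have hsummable : Summable (fun p : {p : ℕ // r - 1 ≤ p} => Spn ξ p.1 p.1) :=
      Summable.of_nonneg_of_le (fun p => Spn_nonneg p.1 p.1) hle hbsummable
    calc (∑' p : {p : ℕ // r - 1 ≤ p}, Spn ξ p.1 p.1)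
        ≤ ∑' p : {p : ℕ // r - 1 ≤ p}, x ^ p.1 / (1 - x) :=
          Summable.tsum_le_tsum hle hsummable hbsummable
      _ = (∑' p : {p : ℕ // r - 1 ≤ p}, x ^ p.1) / (1 - x) := by
          simp [div_eq_mul_inv, tsum_mul_right]
      _ = x ^ (r - 1) / (1 - x) / (1 - x) := by rw [geom_subtype_tsum hx0.le hx1]
      _ = x ^ (r - 1) / (1 - x) ^ 2 := by rw [div_div, ← pow_two]
  -- combine
  have hxr : x ^ (r - 1) ≤ Real.exp κ * Real.exp (-k * r) := by
    rw [hxe, ← Real.exp_nat_mul, ← Real.exp_add]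
    apply Real.exp_le_exp.mpr
    rw [hcast]
    have : 0 ≤ (r : ℝ) := Nat.cast_nonneg r
    nlinarith [mul_le_mul_of_nonneg_right hkκ this]
  have hrR : (1:ℝ) ≤ (r : ℝ) := by exact_mod_cast hr1
  clear_value x
  calc (∑ p ∈ Finset.range (r - 1), Spn ξ p (r - 1)) +
          (∑' p : {p : ℕ // r - 1 ≤ p}, Spn ξ p.1 p.1)
      ≤ ((r : ℝ) - 1) * (x ^ (r - 1) / (1 - x)) + x ^ (r - 1) / (1 - x) ^ 2 :=
        add_le_add h1 h2
    _ ≤ (r : ℝ) * (x ^ (r - 1) / (1 - x)) + (r : ℝ) * (x ^ (r - 1) / (1 - x) ^ 2) := by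
        have hpos : 0 ≤ x ^ (r - 1) / (1 - x) := by positivity
        have hpos2 : 0 ≤ x ^ (r - 1) / (1 - x) ^ 2 := by positivity
        exact add_le_add (mul_le_mul_of_nonneg_right (by linarith) hpos)
          (le_mul_of_one_le_left hpos2 hrR)
    _ = x ^ (r - 1) * ((r : ℝ) * (1 / (1 - x) + 1 / (1 - x) ^ 2)) := by ring
    _ ≤ (Real.exp κ * Real.exp (-k * r)) * ((r : ℝ) * (1 / (1 - x) + 1 / (1 - x) ^ 2)) := by
        have : 0 ≤ (r : ℝ) * (1 / (1 - x) + 1 / (1 - x) ^ 2) := by positivity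
        exact mul_le_mul_of_nonneg_right hxr this
    _ = Real.exp κ * (1 / (1 - x) + 1 / (1 - x) ^ 2) * r * Real.exp (-k * r) := by ring
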